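/- arXiv:2508.10870 — 3 statements merged into one kernel-verified Lean document; each statement's English description precedes it below -/
import Mathlib

section
/- Let G be a finite simple graph on the vertex set [n] without isolated vertices. The following conditions are equivalent: (a) the edge ideal I(G) is matroidal; (b) the complementary edge ideal I_c(G) is matroidal; (c) the complementary graph G^c is P_3-free (contains no induced path on three vertices); (d) G^c is a disjoint union of cliques; (e) G is a complete multipartite graph. -/
open MvPolynomial Finset

set_option maxHeartbeats 1000000
set_option synthInstance.maxHeartbeats 1000000

section Graphs

variable {V : Type*}

/-- A graph has no isolated vertices. -/
def SimpleGraph.NoIsolatedVertices (G : SimpleGraph V) : Prop :=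
  ∀ v : V, ∃ w : V, G.Adj v w

/-- `c(G)`: the number of connected components of `G` which are not isolated vertices. -/
noncomputable def SimpleGraph.cNum (G : SimpleGraph V) : ℕ :=
  Nat.card {c : G.ConnectedComponent // ∃ v w : V, G.Adj v w ∧ G.connectedComponentMk v = c}

/-- `G` contains an induced cycle on `s` vertices. -/
def SimpleGraph.HasInducedCycle (G : SimpleGraph V) (s : ℕ) : Prop :=
  ∃ f : ZMod s → V, Function.Injective f ∧
    ∀ i j : ZMod s, G.Adj (f i) (f j) ↔ (j = i + 1 ∨ i = j + 1)

/-- A graph is chordal if it has no induced cycle of length `≥ 4`. -/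
def SimpleGraph.Chordal (G : SimpleGraph V) : Prop :=
  ∀ s : ℕ, 4 ≤ s → ¬ G.HasInducedCycle s

/-- `G` has no induced path on three vertices. -/
def SimpleGraph.P3Free (G : SimpleGraph V) : Prop :=
  ¬ ∃ a b c : V, a ≠ c ∧ G.Adj a b ∧ G.Adj b c ∧ ¬ G.Adj a c

/-- `G` is a disjoint union of cliques: the vertices can be partitioned so that two
vertices are adjacent exactly when they are distinct and lie in the same part. -/
def SimpleGraph.IsDisjointUnionOfCliques (G : SimpleGraph V) : Prop :=
  ∃ (ι : Type) (P : V → ι), ∀ a b : V, G.Adj a b ↔ (a ≠ b ∧ P a = P b)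

/-- `G` is complete multipartite: the vertices can be partitioned so that two vertices
are adjacent exactly when they lie in different parts. -/
def SimpleGraph.IsCompleteMultipartite' (G : SimpleGraph V) : Prop :=
  ∃ (ι : Type) (P : V → ι), ∀ a b : V, G.Adj a b ↔ P a ≠ P b

/-- The path graph `P_s` on `s` vertices `0 — 1 — ⋯ — (s-1)`. -/
def pathG (s : ℕ) : SimpleGraph (Fin s) :=
  SimpleGraph.fromRel (fun i j => (i : ℕ) + 1 = (j : ℕ))

/-- The graph `2K₂`, the disjoint union of two edges. -/
def twoK2 : SimpleGraph (Fin 4) :=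
  SimpleGraph.fromRel (fun i j => (i = 0 ∧ j = 1) ∨ (i = 2 ∧ j = 3))

end Graphs

namespace CompEdge

variable (K : Type*) [Field K] (n : ℕ)

/-- The squarefree monomial `∏ i ∈ F, xᵢ` associated to a set `F` of variables. -/
noncomputable def sqMon (F : Finset (Fin n)) : MvPolynomial (Fin n) K :=
  ∏ i ∈ F, X i

/-- The monomial prime ideal `P_F = (xᵢ : i ∈ F)`. -/
noncomputable def PF (F : Finset (Fin n)) : Ideal (MvPolynomial (Fin n) K) :=
  Ideal.span ((fun i => (X i : MvPolynomial (Fin n) K)) '' F)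

/-- `u` is a (monic) monomial. -/
def IsMonomial (u : MvPolynomial (Fin n) K) : Prop :=
  ∃ a : Fin n →₀ ℕ, u = monomial a (1 : K)

/-- `u` belongs to the minimal monomial generating set `G(I)` of a monomial ideal `I`:
`u` is a monomial of `I` such that the only monomial of `I` dividing `u` is `u` itself. -/
def IsMinGen (I : Ideal (MvPolynomial (Fin n) K)) (u : MvPolynomial (Fin n) K) : Prop :=
  IsMonomial K n u ∧ u ∈ I ∧
    ∀ v : MvPolynomial (Fin n) K, IsMonomial K n v → v ∈ I → v ∣ u → v = u

/-- A monomial ideal: an ideal generated by monomials. -/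
def IsMonomialIdeal (I : Ideal (MvPolynomial (Fin n) K)) : Prop :=
  ∃ A : Set (Fin n →₀ ℕ), I = Ideal.span ((fun a => (monomial a (1 : K))) '' A)

/-- A squarefree monomial ideal: an ideal generated by squarefree monomials. -/
def IsSqfreeMonomialIdeal (I : Ideal (MvPolynomial (Fin n) K)) : Prop :=
  ∃ 𝒜 : Set (Finset (Fin n)), I = Ideal.span (sqMon K n '' 𝒜)

/-- The complementary ideal `I_c(I) = ( x₁⋯xₙ/u : u ∈ G(I) )` of a squarefree monomial
ideal `I`.  (For `I = 0` the set of minimal generators is empty and this is `0`.) -/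
noncomputable def compIdeal (I : Ideal (MvPolynomial (Fin n) K)) :
    Ideal (MvPolynomial (Fin n) K) :=
  Ideal.span {v | ∃ F : Finset (Fin n),
    IsMinGen K n I (sqMon K n F) ∧ v = sqMon K n (Finset.univ \ F)}

/-- A polymatroidal ideal: a monomial ideal generated in a single degree satisfying the
exchange property. -/
def IsPolymatroidal (I : Ideal (MvPolynomial (Fin n) K)) : Prop :=
  IsMonomialIdeal K n I ∧
  (∃ d : ℕ, ∀ u, IsMinGen K n I u → u.totalDegree = d) ∧
  (∀ u v, IsMinGen K n I u → IsMinGen K n I v → ∀ i : Fin n,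
    degreeOf i v < degreeOf i u →
      ∃ j : Fin n, degreeOf j u < degreeOf j v ∧
        ∃ w, IsMinGen K n I w ∧ X i * w = X j * u)

/-- A matroidal ideal: a squarefree polymatroidal ideal. -/
def IsMatroidal (I : Ideal (MvPolynomial (Fin n) K)) : Prop :=
  IsPolymatroidal K n I ∧ IsSqfreeMonomialIdeal K n I

/-- The edge ideal `I(G) = ( xᵢxⱼ : {i,j} ∈ E(G) )` of a graph. -/
noncomputable def edgeIdeal (G : SimpleGraph (Fin n)) : Ideal (MvPolynomial (Fin n) K) :=
  Ideal.span {u | ∃ i j : Fin n, G.Adj i j ∧ u = X i * X j}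

/-- The complementary edge ideal `I_c(G) = ( x₁⋯xₙ/(xᵢxⱼ) : {i,j} ∈ E(G) )`. -/
noncomputable def compEdgeIdeal (G : SimpleGraph (Fin n)) :
    Ideal (MvPolynomial (Fin n) K) :=
  Ideal.span {u | ∃ i j : Fin n, G.Adj i j ∧ u = sqMon K n (Finset.univ \ {i, j})}

/-- The `t`-clique ideal `K_t(G)` of a graph, generated by the monomials `x_F` with
`F` a `t`-clique of `G`. -/
noncomputable def cliqueIdeal (t : ℕ) (G : SimpleGraph (Fin n)) :
    Ideal (MvPolynomial (Fin n) K) :=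
  Ideal.span {u | ∃ T : Finset (Fin n), G.IsNClique t T ∧ u = sqMon K n T}

/-- The Alexander dual of a squarefree monomial ideal `I`: if `I = ⋂ᵢ P_{Fᵢ}` is the
minimal primary decomposition (the primary components `P_{Fᵢ}` being the minimal primes
of `I`), then `I^∨ = (x_{F₁}, …, x_{Fₘ})`. -/
noncomputable def alexDual (I : Ideal (MvPolynomial (Fin n) K)) :
    Ideal (MvPolynomial (Fin n) K) :=
  Ideal.span {u | ∃ F : Finset (Fin n), PF K n F ∈ I.minimalPrimes ∧ u = sqMon K n F}

/-- The complementary cover ideal `J_c(G) = I_c(G)^∨`. -/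
noncomputable def compCoverIdeal (G : SimpleGraph (Fin n)) :
    Ideal (MvPolynomial (Fin n) K) :=
  alexDual K n (compEdgeIdeal K n G)

/-- The squarefree Veronese ideal `I_{n,d}`, generated by all squarefree monomials
of degree `d`. -/
noncomputable def veroneseIdeal (d : ℕ) : Ideal (MvPolynomial (Fin n) K) :=
  Ideal.span {u | ∃ F : Finset (Fin n), F.card = d ∧ u = sqMon K n F}

/-- For a monomial ideal `J`, `∂J` is the ideal generated by the monomials `u/xᵢ` where
`u` is a minimal monomial generator of `J` and `xᵢ` divides `u`. -/
noncomputable def derivIdeal (J : Ideal (MvPolynomial (Fin n) K)) :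
    Ideal (MvPolynomial (Fin n) K) :=
  Ideal.span {v | ∃ u, IsMinGen K n J u ∧ ∃ i : Fin n, X i ∣ u ∧ X i * v = u}

/-- The graded maximal ideal `m = (x₁, …, xₙ)`. -/
noncomputable def mIdeal : Ideal (MvPolynomial (Fin n) K) :=
  Ideal.span (Set.range (X : Fin n → MvPolynomial (Fin n) K))

/-- `I` is unmixed: all associated primes of `S/I` have the same height. -/
def IsUnmixed (I : Ideal (MvPolynomial (Fin n) K)) : Prop :=
  ∀ p q : Ideal (MvPolynomial (Fin n) K),
    (hp : IsAssociatedPrime p (MvPolynomial (Fin n) K ⧸ I)) →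
    (hq : IsAssociatedPrime q (MvPolynomial (Fin n) K ⧸ I)) →
    Order.height (⟨p, hp.1⟩ : PrimeSpectrum (MvPolynomial (Fin n) K)) =
      Order.height (⟨q, hq.1⟩ : PrimeSpectrum (MvPolynomial (Fin n) K))

variable (M : Type*) [AddCommGroup M] [Module (MvPolynomial (Fin n) K) M]

/-- The depth of a module over `S = K[x₁,…,xₙ]` with respect to the graded maximal
ideal: the supremum of the lengths of `M`-regular sequences with entries in `m`. -/
noncomputable def mdepth : ℕ :=
  sSup {r : ℕ | ∃ rs : List (MvPolynomial (Fin n) K), rs.length = r ∧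
    (∀ f ∈ rs, f ∈ mIdeal K n) ∧ RingTheory.Sequence.IsRegular M rs}

/-- The Krull dimension of a module: `dim M = dim S/ann M`. -/
noncomputable def mdim : WithBot ℕ∞ :=
  ringKrullDim (MvPolynomial (Fin n) K ⧸ Module.annihilator (MvPolynomial (Fin n) K) M)

/-- A module over `S` is Cohen–Macaulay if it is zero or its depth equals its
Krull dimension. -/
noncomputable def IsCMmod : Prop :=
  Subsingleton M ∨ (mdepth K n M : WithBot ℕ∞) = mdim K n M

end CompEdge

namespace CompEdge

/-- The `i`-th term `M ⊗ Λⁱ(Sⁿ)` of the Koszul complex of `x₁, …, xₙ` with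
coefficients in `M`, realized as the free `M`-module on the `i`-element subsets
of the variables. -/
abbrev KosTerm (n : ℕ) (M : Type*) [AddCommGroup M] (i : ℕ) :=
  {F : Finset (Fin n) // F.card = i} →₀ M

variable (K : Type*) [Field K] (n : ℕ)
variable (M : Type*) [AddCommGroup M] [Module (MvPolynomial (Fin n) K) M]

/-- The Koszul differential `M ⊗ Λ^{i+1}(Sⁿ) → M ⊗ Λ^{i}(Sⁿ)`,
`e_F ⊗ m ↦ ∑_{k ∈ F} (-1)^{|{j ∈ F : j < k}|} e_{F∖{k}} ⊗ (x_k m)`. -/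
noncomputable def kosD (i : ℕ) :
    KosTerm n M (i + 1) →ₗ[MvPolynomial (Fin n) K] KosTerm n M i :=
  Finsupp.lsum (MvPolynomial (Fin n) K)
    fun F : {F : Finset (Fin n) // F.card = i + 1} =>
      ∑ k ∈ F.1.attach,
        ((-1 : MvPolynomial (Fin n) K) ^ ((F.1.filter (fun j => j < (k : Fin n))).card) *
          X (k : Fin n)) •
          (Finsupp.lsingle (⟨F.1.erase (k : Fin n), by
            rw [Finset.card_erase_of_mem k.2, F.2]; omega⟩ :
              {F : Finset (Fin n) // F.card = i}) :
            M →ₗ[MvPolynomial (Fin n) K] KosTerm n M i)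

/-- The cycles in homological degree `i` of the Koszul complex. -/
noncomputable def kosZ (i : ℕ) : Submodule (MvPolynomial (Fin n) K) (KosTerm n M i) :=
  match i with
  | 0 => ⊤
  | (j + 1) => LinearMap.ker (kosD K n M j)

/-- The boundaries in homological degree `i` of the Koszul complex. -/
noncomputable def kosB (i : ℕ) : Submodule (MvPolynomial (Fin n) K) (KosTerm n M i) :=
  LinearMap.range (kosD K n M i)

/-- The `i`-th Koszul homology `H_i(x₁,…,xₙ; M) = Tor_i^S(K, M)`. -/
@[reducible] noncomputable def KosHomology (i : ℕ) :=
  kosZ K n M i ⧸ (Submodule.comap (kosZ K n M i).subtype (kosB K n M i))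

variable [Module K M] [IsScalarTower K (MvPolynomial (Fin n) K) M]

/-- The `i`-th total Betti number `β_i(M) = dim_K Tor_i^S(K, M)`, computed as the
`K`-dimension of the `i`-th Koszul homology of `M`. -/
noncomputable def bettiTot (i : ℕ) : ℕ :=
  Module.finrank K (KosHomology K n M i)

/-- The projective dimension of `M`: the largest `i` with `β_i(M) ≠ 0`. -/
noncomputable def projDim : ℕ :=
  sSup {i : ℕ | bettiTot K n M i ≠ 0}

/-- For an ideal `I ⊆ S`, the internal-degree-`j` graded piece of the `i`-th term of the
Koszul complex with coefficients in `I`: the basis element `e_F` has internal degree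
`|F| = i`, so the coefficient of `e_F` must be homogeneous of degree `j - i`. -/
noncomputable def kosDegPiece (I : Ideal (MvPolynomial (Fin n) K)) (i j : ℕ) :
    Submodule K (KosTerm n I i) :=
  if i ≤ j then
    ⨅ F : {F : Finset (Fin n) // F.card = i},
      Submodule.comap
        (((I.subtype).restrictScalars K).comp
          (Finsupp.lapply F : KosTerm n I i →ₗ[K] I))
        (homogeneousSubmodule (Fin n) K (j - i))
  else ⊥

/-- The degree-`j` cycles of the Koszul complex of an ideal. -/
noncomputable def kosZdeg (I : Ideal (MvPolynomial (Fin n) K)) (i j : ℕ) :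
    Submodule K (KosTerm n I i) :=
  (kosZ K n I i).restrictScalars K ⊓ kosDegPiece K n I i j

/-- The degree-`j` boundaries of the Koszul complex of an ideal. -/
noncomputable def kosBdeg (I : Ideal (MvPolynomial (Fin n) K)) (i j : ℕ) :
    Submodule K (KosTerm n I i) :=
  (kosB K n I i).restrictScalars K ⊓ kosDegPiece K n I i j

/-- The graded Betti number `β_{i,j}(I) = dim_K Tor_i^S(K, I)_j` of an ideal `I ⊆ S`,
computed as the `K`-dimension of the degree-`j` part of the `i`-th Koszul homology
of `I`. -/
noncomputable def betti (I : Ideal (MvPolynomial (Fin n) K)) (i j : ℕ) : ℕ :=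
  Module.finrank K
    (↥(kosZdeg K n I i j) ⧸
      Submodule.comap (kosZdeg K n I i j).subtype (kosBdeg K n I i j))

/-- The Castelnuovo–Mumford regularity `reg I = max{ j - i : β_{i,j}(I) ≠ 0 }`. -/
noncomputable def regNat (I : Ideal (MvPolynomial (Fin n) K)) : ℕ :=
  sSup {d : ℕ | ∃ i j : ℕ, betti K n I i j ≠ 0 ∧ j = i + d}

/-- A homogeneous ideal has a `d`-linear resolution: it is generated by homogeneous
elements of degree `d` and `β_{i,j}(I) ≠ 0` implies `j = d + i`. -/
noncomputable def HasLinearResolution (I : Ideal (MvPolynomial (Fin n) K)) : Prop :=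
  ∃ d : ℕ, (∃ A : Set (MvPolynomial (Fin n) K),
      A ⊆ (homogeneousSubmodule (Fin n) K d : Set (MvPolynomial (Fin n) K)) ∧
      I = Ideal.span A) ∧
    ∀ i j : ℕ, betti K n I i j ≠ 0 → j = d + i

/-- A monomial ideal has linear quotients: its minimal monomial generators can be ordered
`u₁, …, uₘ` so that each colon ideal `(u₁,…,u_{i-1}) : (u_i)` is generated by variables. -/
def HasLinearQuotients (I : Ideal (MvPolynomial (Fin n) K)) : Prop :=
  ∃ (m : ℕ) (u : Fin m → MvPolynomial (Fin n) K), Function.Injective u ∧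
    {w | IsMinGen K n I w} = Set.range u ∧
    ∀ i : Fin m, 0 < (i : ℕ) →
      ∃ V ⊆ Set.range (X : Fin n → MvPolynomial (Fin n) K),
        Submodule.colon (Ideal.span (u '' {j : Fin m | (j : ℕ) < (i : ℕ)}))
          (Ideal.span {u i}) = Ideal.span V

/-- The ideal `I_{⟨j⟩}` generated by the degree-`j` homogeneous elements of `I`. -/
noncomputable def componentPart (I : Ideal (MvPolynomial (Fin n) K)) (j : ℕ) :
    Ideal (MvPolynomial (Fin n) K) :=
  Ideal.span {f | f ∈ I ∧ f ∈ homogeneousSubmodule (Fin n) K j}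

/-- An ideal is componentwise linear if each `I_{⟨j⟩}` has a linear resolution. -/
noncomputable def IsComponentwiseLinear (I : Ideal (MvPolynomial (Fin n) K)) : Prop :=
  ∀ j : ℕ, HasLinearResolution K n (componentPart K n I j)

/-- A submodule of `S/I` is graded if it is generated by images of homogeneous
polynomials. -/
def IsGradedSubmodule (I : Ideal (MvPolynomial (Fin n) K))
    (N : Submodule (MvPolynomial (Fin n) K) (MvPolynomial (Fin n) K ⧸ I)) : Prop :=
  ∃ T : Set (MvPolynomial (Fin n) K),
    (∀ f ∈ T, ∃ d : ℕ, f ∈ homogeneousSubmodule (Fin n) K d) ∧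
    N = Submodule.span (MvPolynomial (Fin n) K) (Ideal.Quotient.mk I '' T)

/-- The subquotient `P/N` of `S/I` associated to submodules `N ≤ P`. -/
abbrev subquot {I : Ideal (MvPolynomial (Fin n) K)}
    (N P : Submodule (MvPolynomial (Fin n) K) (MvPolynomial (Fin n) K ⧸ I)) :=
  ↥P ⧸ (Submodule.comap P.subtype N)

/-- `S/I` is sequentially Cohen–Macaulay: there is a finite filtration
`0 = M₀ ⊆ M₁ ⊆ ⋯ ⊆ M_r = S/I` by graded submodules with each quotient `Mᵢ/Mᵢ₋₁`
Cohen–Macaulay and `dim (M₁/M₀) < dim (M₂/M₁) < ⋯ < dim (M_r/M_{r-1})`. -/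
noncomputable def IsSeqCM (I : Ideal (MvPolynomial (Fin n) K)) : Prop :=
  ∃ (r : ℕ) (F : ℕ → Submodule (MvPolynomial (Fin n) K) (MvPolynomial (Fin n) K ⧸ I)),
    F 0 = ⊥ ∧ F r = ⊤ ∧ (∀ i, i < r → F i ≤ F (i + 1)) ∧
    (∀ i, i ≤ r → IsGradedSubmodule K n I (F i)) ∧
    (∀ i, i < r → IsCMmod K n (subquot K n (F i) (F (i + 1)))) ∧
    (∀ i, i + 1 < r →
      mdim K n (subquot K n (F i) (F (i + 1))) <
        mdim K n (subquot K n (F (i + 1)) (F (i + 2))))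

/-- `S/I` is Gorenstein: it is the zero ring, or it is Cohen–Macaulay with
Cohen–Macaulay type `1`, i.e. the last total Betti number in its minimal graded free
resolution over `S` equals `1`. -/
noncomputable def IsGorensteinQuot (I : Ideal (MvPolynomial (Fin n) K)) : Prop :=
  Subsingleton (MvPolynomial (Fin n) K ⧸ I) ∨
    (IsCMmod K n (MvPolynomial (Fin n) K ⧸ I) ∧
      bettiTot K n (MvPolynomial (Fin n) K ⧸ I)
        (projDim K n (MvPolynomial (Fin n) K ⧸ I)) = 1)

/-- The canonical module `ω_{S/I} = Ext_S^{n - depth S/I}(S/I, S)` of `S/I`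
(for `S/I` Cohen–Macaulay, `n - depth S/I = height I` is the codimension). -/
noncomputable def canonicalModule (I : Ideal (MvPolynomial (Fin n) K)) :
    ModuleCat (MvPolynomial (Fin n) K) :=
  ((Ext (MvPolynomial (Fin n) K) (ModuleCat (MvPolynomial (Fin n) K))
      (n - mdepth K n (MvPolynomial (Fin n) K ⧸ I))).obj
    (Opposite.op (ModuleCat.of (MvPolynomial (Fin n) K) (MvPolynomial (Fin n) K ⧸ I)))).obj
    (ModuleCat.of (MvPolynomial (Fin n) K) (MvPolynomial (Fin n) K))

/-- The trace of the canonical module of `S/I`: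
`tr(ω) = Σ_{φ ∈ Hom(ω, S/I)} φ(ω)`, as a submodule of `S/I`. -/
noncomputable def canonicalTrace (I : Ideal (MvPolynomial (Fin n) K)) :
    Submodule (MvPolynomial (Fin n) K) (MvPolynomial (Fin n) K ⧸ I) :=
  ⨆ φ : (canonicalModule K n I →ₗ[MvPolynomial (Fin n) K] (MvPolynomial (Fin n) K ⧸ I)),
    LinearMap.range φ

/-- `S/I` is nearly Gorenstein: it is Cohen–Macaulay and the graded maximal ideal of
`S/I` is contained in the trace of the canonical module. -/
noncomputable def IsNearlyGorensteinQuot (I : Ideal (MvPolynomial (Fin n) K)) : Prop :=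
  IsCMmod K n (MvPolynomial (Fin n) K ⧸ I) ∧
    Submodule.restrictScalars (MvPolynomial (Fin n) K)
        (Ideal.map (Ideal.Quotient.mk I) (mIdeal K n)) ≤
      canonicalTrace K n I

end CompEdge

-- ### auxiliary development
namespace CompEdge
variable {K : Type*} [Field K] {n : ℕ}

noncomputable def indic (F : Finset (Fin n)) : Fin n →₀ ℕ := ∑ i ∈ F, Finsupp.single i 1

lemma indic_apply (F : Finset (Fin n)) (x : Fin n) :
    indic F x = if x ∈ F then 1 else 0 := by
  classical
  rw [indic, Finsupp.finset_sum_apply]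
  simp [Finsupp.single_apply]

lemma sqMon_eq_monomial (F : Finset (Fin n)) :
    sqMon K n F = monomial (indic F) (1 : K) := by
  classical
  induction F using Finset.induction_on with
  | empty => simp [sqMon, indic]
  | @insert a F h ih =>
    have : sqMon K n (insert a F) = X a * sqMon K n F := by
      rw [sqMon, sqMon, Finset.prod_insert h]
    have hins : indic (insert a F) = Finsupp.single a 1 + indic F := by
      rw [indic, indic, Finset.sum_insert h]
    rw [this, ih, hins, X, monomial_mul, one_mul]

lemma totalDegree_sqMon (F : Finset (Fin n)) :
    (sqMon K n F : MvPolynomial (Fin n) K).totalDegree = F.card := by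
  classical
  rw [sqMon_eq_monomial, totalDegree_monomial _ (one_ne_zero : (1:K) ≠ 0)]
  induction F using Finset.induction_on with
  | empty => simp [indic]
  | @insert a F h ih =>
    rw [indic, Finset.sum_insert h, Finsupp.sum_add_index' (fun _ => rfl) (fun _ _ _ => rfl),
      Finsupp.sum_single_index rfl, ← indic, ih, Finset.card_insert_of_notMem h, add_comm]

lemma degreeOf_sqMon (F : Finset (Fin n)) (x : Fin n) :
    degreeOf x (sqMon K n F : MvPolynomial (Fin n) K) = if x ∈ F then 1 else 0 := by
  classical
  rw [sqMon_eq_monomial, degreeOf_monomial_eq _ _ (one_ne_zero : (1:K) ≠ 0), indic_apply]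

lemma X_mul_sqMon {F : Finset (Fin n)} {i : Fin n} (h : i ∉ F) :
    X i * sqMon K n F = (sqMon K n (insert i F) : MvPolynomial (Fin n) K) := by
  rw [sqMon, sqMon, Finset.prod_insert h]

lemma mem_span_sqMon_iff {𝒜 : Set (Finset (Fin n))} {a : Fin n →₀ ℕ} :
    monomial a (1:K) ∈ Ideal.span (sqMon K n '' 𝒜) ↔ ∃ F ∈ 𝒜, indic F ≤ a := by
  classical
  have himg : sqMon K n '' 𝒜 = (fun s => monomial s (1:K)) '' (indic '' 𝒜) := by
    rw [Set.image_image]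
    exact Set.image_congr fun F _ => sqMon_eq_monomial F
  rw [himg, mem_ideal_span_monomial_image]
  simp [support_monomial, (one_ne_zero : (1:K) ≠ 0)]

lemma isMinGen_span_sqMon_iff {𝒜 : Set (Finset (Fin n))} {d : ℕ}
    (hd : ∀ F ∈ 𝒜, F.card = d) (u : MvPolynomial (Fin n) K) :
    IsMinGen K n (Ideal.span (sqMon K n '' 𝒜)) u ↔ ∃ F ∈ 𝒜, u = sqMon K n F := by
  constructor
  · rintro ⟨⟨a, rfl⟩, hmem, hmin⟩
    obtain ⟨F, hF, hle⟩ := mem_span_sqMon_iff.mp hmem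
    refine ⟨F, hF, ?_⟩
    have hdvd : sqMon K n F ∣ monomial a (1:K) := by
      rw [sqMon_eq_monomial, monomial_dvd_monomial]
      exact ⟨Or.inr hle, dvd_refl 1⟩
    exact (hmin (sqMon K n F) ⟨indic F, sqMon_eq_monomial F⟩
      (Ideal.subset_span ⟨F, hF, rfl⟩) hdvd).symm
  · rintro ⟨F, hF, rfl⟩
    refine ⟨⟨indic F, sqMon_eq_monomial F⟩, Ideal.subset_span ⟨F, hF, rfl⟩, ?_⟩
    rintro v ⟨b, rfl⟩ hv hdvd
    obtain ⟨F', hF', hle'⟩ := mem_span_sqMon_iff.mp hv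
    rw [sqMon_eq_monomial] at hdvd
    have hb : b ≤ indic F := by
      rcases (monomial_dvd_monomial.mp hdvd).1 with h | h
      · exact absurd h one_ne_zero
      · exact h
    have hsub : F' ⊆ F := by
      intro x hx
      have h1 : (1:ℕ) ≤ b x := by
        have := Finsupp.le_def.mp hle' x
        rwa [indic_apply, if_pos hx] at this
      have h2 := le_trans h1 (Finsupp.le_def.mp hb x)
      rw [indic_apply] at h2
      by_contra hc
      rw [if_neg hc] at h2
      omega
    have hFF : F' = F :=
      Finset.eq_of_subset_of_card_le hsub (by rw [hd F hF, hd F' hF'])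
    have : b = indic F := le_antisymm hb (hFF ▸ hle')
    rw [sqMon_eq_monomial, this]

/-- The matroid-type exchange property on a family of finsets. -/
def FinsetExchange (𝒜 : Set (Finset (Fin n))) : Prop :=
  ∀ Fu ∈ 𝒜, ∀ Fv ∈ 𝒜, ∀ i, i ∈ Fu → i ∉ Fv →
    ∃ j, j ∈ Fv ∧ j ∉ Fu ∧ insert j (Fu.erase i) ∈ 𝒜

lemma isMatroidal_span_sqMon_iff {𝒜 : Set (Finset (Fin n))} {d : ℕ}
    (hd : ∀ F ∈ 𝒜, F.card = d) :
    IsMatroidal K n (Ideal.span (sqMon K n '' 𝒜)) ↔ FinsetExchange 𝒜 := by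
  classical
  constructor
  · rintro ⟨⟨-, -, hex⟩, -⟩
    intro Fu hFu Fv hFv i hiu hiv
    have hu := (isMinGen_span_sqMon_iff hd (sqMon K n Fu)).mpr ⟨Fu, hFu, rfl⟩
    have hv := (isMinGen_span_sqMon_iff hd (sqMon K n Fv)).mpr ⟨Fv, hFv, rfl⟩
    obtain ⟨j, hj, w, hw, heq⟩ := hex _ _ hu hv i (by
      rw [degreeOf_sqMon, degreeOf_sqMon, if_pos hiu, if_neg hiv]; omega)
    obtain ⟨Fw, hFw, rfl⟩ := (isMinGen_span_sqMon_iff hd w).mp hw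
    rw [degreeOf_sqMon, degreeOf_sqMon] at hj
    have hjv : j ∈ Fv := by by_contra hc; rw [if_neg hc] at hj; omega
    have hju : j ∉ Fu := by intro hc; rw [if_pos hc, if_pos hjv] at hj; omega
    refine ⟨j, hjv, hju, ?_⟩
    rw [sqMon_eq_monomial, sqMon_eq_monomial, X, X, monomial_mul, monomial_mul,
      one_mul] at heq
    have hexp := monomial_left_injective (one_ne_zero : (1:K) ≠ 0) heq
    have hij : i ≠ j := fun h => hju (h ▸ hiu)
    have hji : j ≠ i := hij.symm
    have hval : ∀ x, (if i = x then (1:ℕ) else 0) + (if x ∈ Fw then 1 else 0)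
        = (if j = x then 1 else 0) + (if x ∈ Fu then 1 else 0) := by
      intro x
      have hx := DFunLike.congr_fun hexp x
      simpa only [Finsupp.add_apply, Finsupp.single_apply, indic_apply] using hx
    have h1 : i ∉ Fw := by
      intro hc
      have h := hval i
      rw [if_pos rfl, if_neg hji, if_pos hc, if_pos hiu] at h
      omega
    have h2 : j ∈ Fw := by
      by_contra hc
      have h := hval j
      rw [if_neg hij, if_pos rfl, if_neg hc, if_neg hju] at h
      omega
    have hFweq : Fw = insert j (Fu.erase i) := by
      ext x
      simp only [Finset.mem_insert, Finset.mem_erase]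
      by_cases h3 : x = i
      · subst h3
        simp [h1, hij]
      · by_cases h4 : x = j
        · subst h4
          simp [h2]
        · have h := hval x
          rw [if_neg (show ¬(i = x) from fun hh => h3 hh.symm),
            if_neg (show ¬(j = x) from fun hh => h4 hh.symm)] at h
          simp only [zero_add] at h
          by_cases hc : x ∈ Fw
          · rw [if_pos hc] at h
            have hxu : x ∈ Fu := by by_contra hcc; rw [if_neg hcc] at h; omega
            simp [hc, h3, h4, hxu]
          · rw [if_neg hc] at h
            have hxu : x ∉ Fu := by intro hcc; rw [if_pos hcc] at h; omega
            simp [hc, h3, h4, hxu]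
    rwa [← hFweq]
  · intro hex
    refine ⟨⟨⟨indic '' 𝒜, ?_⟩, ⟨d, ?_⟩, ?_⟩, ⟨𝒜, rfl⟩⟩
    · congr 1
      rw [Set.image_image]
      exact (Set.image_congr fun F _ => sqMon_eq_monomial F)
    · intro u hu
      obtain ⟨F, hF, rfl⟩ := (isMinGen_span_sqMon_iff hd u).mp hu
      rw [totalDegree_sqMon, hd F hF]
    · intro u v hu hv i hi
      obtain ⟨Fu, hFu, rfl⟩ := (isMinGen_span_sqMon_iff hd u).mp hu
      obtain ⟨Fv, hFv, rfl⟩ := (isMinGen_span_sqMon_iff hd v).mp hv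
      rw [degreeOf_sqMon, degreeOf_sqMon] at hi
      have hiu : i ∈ Fu := by by_contra hc; rw [if_neg hc] at hi; omega
      have hiv : i ∉ Fv := by intro hc; rw [if_pos hc, if_pos hiu] at hi; omega
      obtain ⟨j, hjv, hju, hins⟩ := hex Fu hFu Fv hFv i hiu hiv
      refine ⟨j, ?_, sqMon K n (insert j (Fu.erase i)), ?_, ?_⟩
      · rw [degreeOf_sqMon, degreeOf_sqMon, if_pos hjv, if_neg hju]; omega
      · exact (isMinGen_span_sqMon_iff hd _).mpr ⟨_, hins, rfl⟩
      · have hij : i ≠ j := fun h => hju (h ▸ hiu)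
        have hiw : i ∉ insert j (Fu.erase i) := by
          simp [hij, Finset.mem_erase]
        rw [X_mul_sqMon hiw, X_mul_sqMon hju, Finset.insert_comm,
          Finset.insert_erase hiu]

lemma duc_iff (G : SimpleGraph (Fin n)) :
    Gᶜ.IsDisjointUnionOfCliques ↔ G.IsCompleteMultipartite' := by
  constructor
  · rintro ⟨ι, P, hP⟩
    refine ⟨ι, P, fun a b => ?_⟩
    have h := hP a b
    rw [SimpleGraph.compl_adj] at h
    constructor
    · intro hab hPab
      exact (h.mpr ⟨hab.ne, hPab⟩).2 hab
    · intro hPab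
      by_contra hc
      have hne : a ≠ b := fun he => hPab (he ▸ rfl)
      exact hPab (h.mp ⟨hne, hc⟩).2
  · rintro ⟨ι, P, hP⟩
    refine ⟨ι, P, fun a b => ?_⟩
    rw [SimpleGraph.compl_adj, hP a b]
    constructor
    · rintro ⟨hne, h⟩; exact ⟨hne, not_ne_iff.mp h⟩
    · rintro ⟨hne, h⟩; exact ⟨hne, fun hh => hh h⟩

lemma p3free_iff (G : SimpleGraph (Fin n)) :
    Gᶜ.P3Free ↔ G.IsCompleteMultipartite' := by
  constructor
  · intro h3
    have htrans : ∀ a b c : Fin n, ¬G.Adj a b → ¬G.Adj b c → ¬G.Adj a c := by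
      intro a b c hab hbc hac
      by_cases h1 : a = b
      · exact hbc (h1 ▸ hac)
      by_cases h2 : b = c
      · exact hab (h2 ▸ hac)
      exact h3 ⟨a, b, c, hac.ne, (G.compl_adj a b).mpr ⟨h1, hab⟩,
        (G.compl_adj b c).mpr ⟨h2, hbc⟩, fun hcc => hcc.2 hac⟩
    let s : Setoid (Fin n) :=
      ⟨fun a b => ¬G.Adj a b,
        ⟨fun a => G.loopless.irrefl a, fun h hh => h hh.symm, fun {a b c} hab hbc => htrans a b c hab hbc⟩⟩
    refine ⟨Quotient s, Quotient.mk s, fun a b => ?_⟩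
    constructor
    · intro hab hq
      exact Quotient.exact hq hab
    · intro h
      by_contra hc
      exact h (Quotient.sound hc)
  · rintro ⟨ι, P, hP⟩ ⟨a, b, c, hac, hab, hbc, hnac⟩
    rw [SimpleGraph.compl_adj] at hab hbc
    have h1 : P a = P b := not_ne_iff.mp (fun h => hab.2 ((hP a b).mpr h))
    have h2 : P b = P c := not_ne_iff.mp (fun h => hbc.2 ((hP b c).mpr h))
    have h3 : G.Adj a c := by
      by_contra hcc
      exact hnac ((G.compl_adj a c).mpr ⟨hac, hcc⟩)
    exact (hP a c).mp h3 (h1.trans h2)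

lemma pair_adj {G : SimpleGraph (Fin n)} {r s x y : Fin n} (h : G.Adj r s)
    (hx : x = r ∨ x = s) (hy : y = r ∨ y = s) (hxy : x ≠ y) : G.Adj x y := by
  rcases hx with rfl | rfl <;> rcases hy with rfl | rfl <;>
    first | exact absurd rfl hxy | exact h | exact h.symm

def edgeFam (G : SimpleGraph (Fin n)) : Set (Finset (Fin n)) :=
  {F | ∃ i j : Fin n, G.Adj i j ∧ F = {i, j}}

def compFam (G : SimpleGraph (Fin n)) : Set (Finset (Fin n)) :=
  {F | ∃ i j : Fin n, G.Adj i j ∧ F = Finset.univ \ {i, j}}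

lemma edgeFam_card (G : SimpleGraph (Fin n)) : ∀ F ∈ edgeFam G, F.card = 2 := by
  rintro F ⟨i, j, hij, rfl⟩
  exact Finset.card_pair hij.ne

lemma compFam_card (G : SimpleGraph (Fin n)) : ∀ F ∈ compFam G, F.card = n - 2 := by
  rintro F ⟨i, j, hij, rfl⟩
  rw [Finset.card_sdiff_of_subset (Finset.subset_univ _), Finset.card_univ, Fintype.card_fin,
    Finset.card_pair hij.ne]

lemma edgeIdeal_eq (G : SimpleGraph (Fin n)) :
    edgeIdeal K n G = Ideal.span (sqMon K n '' edgeFam G) := by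
  have hs : {u : MvPolynomial (Fin n) K | ∃ i j : Fin n, G.Adj i j ∧ u = X i * X j}
      = sqMon K n '' edgeFam G := by
    ext u
    constructor
    · rintro ⟨i, j, hij, rfl⟩
      exact ⟨{i, j}, ⟨i, j, hij, rfl⟩, by rw [sqMon, Finset.prod_pair hij.ne]⟩
    · rintro ⟨F, ⟨i, j, hij, rfl⟩, rfl⟩
      exact ⟨i, j, hij, by rw [sqMon, Finset.prod_pair hij.ne]⟩
  exact congrArg Ideal.span hs

lemma compEdgeIdeal_eq (G : SimpleGraph (Fin n)) :
    compEdgeIdeal K n G = Ideal.span (sqMon K n '' compFam G) := by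
  have hs : {u : MvPolynomial (Fin n) K |
        ∃ i j : Fin n, G.Adj i j ∧ u = sqMon K n (Finset.univ \ {i, j})}
      = sqMon K n '' compFam G := by
    ext u
    constructor
    · rintro ⟨i, j, hij, rfl⟩
      exact ⟨_, ⟨i, j, hij, rfl⟩, rfl⟩
    · rintro ⟨F, ⟨i, j, hij, rfl⟩, rfl⟩
      exact ⟨i, j, hij, rfl⟩
  exact congrArg Ideal.span hs

lemma cm_edge_exchange {G : SimpleGraph (Fin n)} (h : G.IsCompleteMultipartite') :
    FinsetExchange (edgeFam G) := by
  obtain ⟨ι, P, hP⟩ := h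
  rintro Fu ⟨p, q, hpq, rfl⟩ Fv ⟨r, s, hrs, rfl⟩ i hiu hiv
  simp only [Finset.mem_insert, Finset.mem_singleton] at hiu hiv
  push_neg at hiv
  obtain ⟨q', hq', hset⟩ : ∃ q', G.Adj i q' ∧ ({p, q} : Finset (Fin n)) = {i, q'} := by
    rcases hiu with h | h
    · subst h; exact ⟨q, hpq, rfl⟩
    · subst h; exact ⟨p, hpq.symm, Finset.pair_comm _ _⟩
  have hne_rs : P r ≠ P s := (hP r s).mp hrs
  obtain ⟨j, hjrs, hPj⟩ : ∃ j, (j = r ∨ j = s) ∧ P j ≠ P q' := by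
    by_cases hc : P r = P q'
    · exact ⟨s, Or.inr rfl, fun h => hne_rs (hc.trans h.symm)⟩
    · exact ⟨r, Or.inl rfl, hc⟩
  have hAdj : G.Adj j q' := (hP j q').mpr hPj
  have hji : j ≠ i := by
    rintro rfl
    rcases hjrs with rfl | rfl
    · exact hiv.1 rfl
    · exact hiv.2 rfl
  have hjq' : j ≠ q' := hAdj.ne
  refine ⟨j, ?_, ?_, ?_⟩
  · rcases hjrs with rfl | rfl <;> simp
  · rw [hset]; simp [hji, hjq']
  · refine ⟨j, q', hAdj, ?_⟩
    rw [hset, Finset.erase_insert (Finset.notMem_singleton.mpr hq'.ne)]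

lemma cm_comp_exchange {G : SimpleGraph (Fin n)} (h : G.IsCompleteMultipartite') :
    FinsetExchange (compFam G) := by
  obtain ⟨ι, P, hP⟩ := h
  rintro Fu ⟨p, q, hpq, rfl⟩ Fv ⟨r, s, hrs, rfl⟩ i hiu hiv
  simp only [Finset.mem_sdiff, Finset.mem_univ, true_and, Finset.mem_insert,
    Finset.mem_singleton, not_or, not_not] at hiu hiv
  rw [not_and_or, not_not, not_not] at hiv
  have htriple : ∀ x y : Fin n, x ≠ y → (x = r ∨ x = s) → (y = r ∨ y = s) →
      (i = r ∨ i = s) → i ≠ x → i ≠ y → False := by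
    intro x y hxy hx hy hi hix hiy
    rcases hx with rfl | rfl <;> rcases hy with rfl | rfl <;> rcases hi with h | h <;> simp_all
  obtain ⟨j, j', hcase, hAdj, hjr, hjs⟩ :
      ∃ j j', (j = p ∧ j' = q ∨ j = q ∧ j' = p) ∧ G.Adj j' i ∧ j ≠ r ∧ j ≠ s := by
    by_cases hpc : p = r ∨ p = s
    · have hA : G.Adj p i := pair_adj hrs hpc hiv (fun h => hiu.1 h.symm)
      refine ⟨q, p, Or.inr ⟨rfl, rfl⟩, hA, ?_, ?_⟩
      · intro h; exact htriple p q hpq.ne hpc (Or.inl h) hiv hiu.1 hiu.2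
      · intro h; exact htriple p q hpq.ne hpc (Or.inr h) hiv hiu.1 hiu.2
    · by_cases hqc : q = r ∨ q = s
      · have hA : G.Adj q i := pair_adj hrs hqc hiv (fun h => hiu.2 h.symm)
        push_neg at hpc
        exact ⟨p, q, Or.inl ⟨rfl, rfl⟩, hA, hpc.1, hpc.2⟩
      · by_cases hPp : P p = P i
        · have hq2 : P q ≠ P i := fun h => (hP p q).mp hpq (hPp.trans h.symm)
          push_neg at hpc
          exact ⟨p, q, Or.inl ⟨rfl, rfl⟩, (hP q i).mpr hq2, hpc.1, hpc.2⟩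
        · push_neg at hqc
          exact ⟨q, p, Or.inr ⟨rfl, rfl⟩, (hP p i).mpr hPp, hqc.1, hqc.2⟩
  have hj_pq : j = p ∨ j = q := by
    rcases hcase with ⟨rfl, rfl⟩ | ⟨rfl, rfl⟩ <;> simp
  have hji' : j ≠ j' := by
    rcases hcase with ⟨rfl, rfl⟩ | ⟨rfl, rfl⟩
    exacts [hpq.ne, hpq.ne.symm]
  have hij' : i ≠ j' := fun h => hAdj.ne h.symm
  have hji2 : j ≠ i := by
    intro hh
    rcases hj_pq with h | h
    · exact hiu.1 (hh ▸ h)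
    · exact hiu.2 (hh ▸ h)
  have hset2 : ({p, q} : Finset (Fin n)) = {j, j'} := by
    rcases hcase with ⟨rfl, rfl⟩ | ⟨rfl, rfl⟩
    exacts [rfl, Finset.pair_comm _ _]
  refine ⟨j, ?_, ?_, ?_⟩
  · simp [Finset.mem_sdiff, hjr, hjs]
  · simp only [Finset.mem_sdiff, Finset.mem_univ, true_and, not_not,
      Finset.mem_insert, Finset.mem_singleton]
    exact hj_pq
  · refine ⟨j', i, hAdj, ?_⟩
    rw [hset2]
    ext x
    simp only [Finset.mem_insert, Finset.mem_erase, Finset.mem_sdiff, Finset.mem_univ,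
      true_and, Finset.mem_singleton, not_or]
    constructor
    · rintro (rfl | ⟨h1, h2, h3⟩)
      · exact ⟨hji', hji2⟩
      · exact ⟨h3, h1⟩
    · rintro ⟨h1, h2⟩
      by_cases h3 : x = j
      · exact Or.inl h3
      · exact Or.inr ⟨h2, h3, h1⟩


lemma matroidal_edge_iff {G : SimpleGraph (Fin n)} (hG : G.NoIsolatedVertices) :
    IsMatroidal K n (edgeIdeal K n G) ↔ G.IsCompleteMultipartite' := by
  rw [edgeIdeal_eq, isMatroidal_span_sqMon_iff (edgeFam_card G)]
  constructor
  · intro hex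
    rw [← p3free_iff]
    rintro ⟨a, b, c, hac, hab, hbc, hnac⟩
    rw [SimpleGraph.compl_adj] at hab hbc
    have hAc : G.Adj a c := by
      by_contra hcc
      exact hnac ((G.compl_adj a c).mpr ⟨hac, hcc⟩)
    obtain ⟨d, hbd⟩ := hG b
    have hda : d ≠ a := fun h => hab.2 (h ▸ hbd).symm
    have hdc : d ≠ c := fun h => hbc.2 (h ▸ hbd)
    have hd_mem : d ∈ ({b, d} : Finset (Fin n)) := by simp
    have hd_nmem : d ∉ ({a, c} : Finset (Fin n)) := by simp [hda, hdc]
    obtain ⟨j, hjv, hju, hins⟩ :=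
      hex {b, d} ⟨b, d, hbd, rfl⟩ {a, c} ⟨a, c, hAc, rfl⟩ d hd_mem hd_nmem
    have hbd_ne : b ≠ d := hbd.ne
    have herase : ({b, d} : Finset (Fin n)).erase d = {b} := by
      rw [Finset.pair_comm, Finset.erase_insert (Finset.notMem_singleton.mpr hbd_ne.symm)]
    rw [herase] at hins
    obtain ⟨r, s, hrs, hpair⟩ := hins
    have hjb : j ≠ b := fun h => hju (by simp [h])
    have hj_mem : j = r ∨ j = s := by
      have : j ∈ ({r, s} : Finset (Fin n)) := hpair ▸ (by simp)
      simpa using this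
    have hb_mem : b = r ∨ b = s := by
      have : b ∈ ({r, s} : Finset (Fin n)) := hpair ▸ (by simp)
      simpa using this
    have hAdj_jb : G.Adj j b := pair_adj hrs hj_mem hb_mem hjb
    have hj_ac : j = a ∨ j = c := by simpa using hjv
    rcases hj_ac with rfl | rfl
    · exact hab.2 hAdj_jb
    · exact hbc.2 hAdj_jb.symm
  · exact cm_edge_exchange

lemma matroidal_comp_iff {G : SimpleGraph (Fin n)} (hG : G.NoIsolatedVertices) :
    IsMatroidal K n (compEdgeIdeal K n G) ↔ G.IsCompleteMultipartite' := by
  rw [compEdgeIdeal_eq, isMatroidal_span_sqMon_iff (compFam_card G)]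
  constructor
  · intro hex
    rw [← p3free_iff]
    rintro ⟨a, b, c, hac, hab, hbc, hnac⟩
    rw [SimpleGraph.compl_adj] at hab hbc
    have hAc : G.Adj a c := by
      by_contra hcc
      exact hnac ((G.compl_adj a c).mpr ⟨hac, hcc⟩)
    obtain ⟨d, hbd⟩ := hG b
    have hb_mem : b ∈ Finset.univ \ ({a, c} : Finset (Fin n)) := by
      simp [Ne.symm hab.1, hbc.1]
    have hb_nmem : b ∉ Finset.univ \ ({b, d} : Finset (Fin n)) := by simp
    obtain ⟨j, hjv, hju, hins⟩ :=
      hex _ ⟨a, c, hAc, rfl⟩ _ ⟨b, d, hbd, rfl⟩ b hb_mem hb_nmem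
    have hj_ac : j = a ∨ j = c := by
      simp only [Finset.mem_sdiff, Finset.mem_univ, true_and, Finset.mem_insert,
        Finset.mem_singleton, not_or] at hju
      rw [not_and_or, not_not, not_not] at hju
      exact hju
    have hj_nb : j ≠ b ∧ j ≠ d := by
      simp only [Finset.mem_sdiff, Finset.mem_univ, true_and, Finset.mem_insert,
        Finset.mem_singleton, not_or] at hjv
      exact hjv
    obtain ⟨r, s, hrs, hpair⟩ := hins
    have hbS : b ∉ insert j ((Finset.univ \ ({a, c} : Finset (Fin n))).erase b) := by
      simp [Ne.symm hj_nb.1]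
    have hb_rs : b = r ∨ b = s := by
      have h2 : b ∉ Finset.univ \ ({r, s} : Finset (Fin n)) := hpair ▸ hbS
      simp only [Finset.mem_sdiff, Finset.mem_univ, true_and, Finset.mem_insert,
        Finset.mem_singleton, not_or] at h2
      rw [not_and_or, not_not, not_not] at h2
      exact h2
    obtain ⟨j', hj'_ac, hj'_ne_j⟩ : ∃ j', (j' = a ∨ j' = c) ∧ j' ≠ j := by
      rcases hj_ac with rfl | rfl
      · exact ⟨c, Or.inr rfl, Ne.symm hac⟩
      · exact ⟨a, Or.inl rfl, hac⟩
    have hj'S : j' ∉ insert j ((Finset.univ \ ({a, c} : Finset (Fin n))).erase b) := by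
      simp only [Finset.mem_insert, Finset.mem_erase, Finset.mem_sdiff, Finset.mem_univ,
        true_and, Finset.mem_singleton, not_or]
      refine ⟨hj'_ne_j, ?_⟩
      rintro ⟨-, h1, h2⟩
      rcases hj'_ac with rfl | rfl
      · exact h1 rfl
      · exact h2 rfl
    have hj'_rs : j' = r ∨ j' = s := by
      have h2 : j' ∉ Finset.univ \ ({r, s} : Finset (Fin n)) := hpair ▸ hj'S
      simp only [Finset.mem_sdiff, Finset.mem_univ, true_and, Finset.mem_insert,
        Finset.mem_singleton, not_or] at h2
      rw [not_and_or, not_not, not_not] at h2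
      exact h2
    have hbj' : b ≠ j' := by
      rcases hj'_ac with rfl | rfl
      · exact Ne.symm hab.1
      · exact hbc.1
    have hAdj : G.Adj b j' := pair_adj hrs hb_rs hj'_rs hbj'
    rcases hj'_ac with rfl | rfl
    · exact hab.2 hAdj.symm
    · exact hbc.2 hAdj
  · exact cm_comp_exchange

end CompEdge

open CompEdge in
/-- For a graph `G` on `[n]` without isolated vertices, the following are
equivalent: (a) `I(G)` is matroidal; (b) `I_c(G)` is matroidal; (c) `Gᶜ` is `P₃`-free;
(d) `Gᶜ` is a disjoint union of cliques; (e) `G` is complete multipartite. -/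
theorem edgeIdeal_matroidal_iff_complete_multipartite
    (K : Type*) [Field K] (n : ℕ) (G : SimpleGraph (Fin n))
    (hG : G.NoIsolatedVertices) :
    (IsMatroidal K n (edgeIdeal K n G) ↔ G.IsCompleteMultipartite') ∧
    (IsMatroidal K n (compEdgeIdeal K n G) ↔ G.IsCompleteMultipartite') ∧
    (Gᶜ.P3Free ↔ G.IsCompleteMultipartite') ∧
    (Gᶜ.IsDisjointUnionOfCliques ↔ G.IsCompleteMultipartite') :=
  ⟨matroidal_edge_iff hG, matroidal_comp_iff hG, p3free_iff G, duc_iff G⟩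
end

section
/- Let S = K[x_1,…,x_n,y_1,…,y_m], let I_1 ⊂ K[x_1,…,x_n] and I_2 ⊂ K[y_1,…,y_m] be monomial ideals (viewed in S) such that x_1⋯x_n ∈ I_1 and y_1⋯y_m ∈ I_2. Fix integers k ≥ 1 and 0 < ℓ ≤ k, and set J_{ℓ−1} = Σ_{h=0}^{ℓ−1} (y_1⋯y_m)^{k−h} (x_1⋯x_n)^{h} I_1^{k−h} I_2^{h}. Then J_{ℓ−1} ∩ ( (y_1⋯y_m)^{k−ℓ} (x_1⋯x_n)^{ℓ} I_1^{k−ℓ} I_2^{ℓ} ) = (y_1⋯y_m)^{k−ℓ+1} I_2^{ℓ−1} (x_1⋯x_n)^{ℓ} I_1^{k−ℓ}. -/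
open MvPolynomial Finset

set_option maxHeartbeats 1000000
set_option synthInstance.maxHeartbeats 1000000

section BettiAuxSec
open Pointwise
namespace BettiAux


variable {σ : Type*} {K : Type*} [Field K]

def sumPow (A : Set (σ →₀ ℕ)) : ℕ → Set (σ →₀ ℕ)
  | 0 => {0}
  | p + 1 => sumPow A p + A

lemma sumPow_succ (A : Set (σ →₀ ℕ)) (p : ℕ) : sumPow A (p + 1) = sumPow A p + A := rfl

lemma span_mono_mul (A B : Set (σ →₀ ℕ)) :
    Ideal.span ((fun a => (monomial a (1 : K))) '' A) *
      Ideal.span ((fun a => (monomial a (1 : K))) '' B) =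
      Ideal.span ((fun a => (monomial a (1 : K))) '' (A + B)) := by
  rw [Ideal.span_mul_span']
  congr 1
  ext p
  constructor
  · rintro ⟨-, ⟨a, ha, rfl⟩, -, ⟨b, hb, rfl⟩, rfl⟩
    exact ⟨a + b, Set.add_mem_add ha hb, by simp [monomial_mul]⟩
  · rintro ⟨-, ⟨a, ha, b, hb, rfl⟩, rfl⟩
    exact ⟨_, ⟨a, ha, rfl⟩, _, ⟨b, hb, rfl⟩, by simp [monomial_mul]⟩

lemma span_mono_pow (A : Set (σ →₀ ℕ)) (p : ℕ) :
    (Ideal.span ((fun a => (monomial a (1 : K))) '' A)) ^ p =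
      Ideal.span ((fun a => (monomial a (1 : K))) '' sumPow A p) := by
  induction p with
  | zero =>
      rw [pow_zero]
      have h1 : (fun a => (monomial a (1 : K))) '' sumPow A 0 = {1} := by
        simp [sumPow, Set.image_singleton]
      rw [h1, Ideal.span_singleton_one, Ideal.one_eq_top]
  | succ p ih =>
      rw [pow_succ, ih, span_mono_mul, sumPow_succ]

lemma sum_span {R : Type*} [CommRing R] (f : ℕ → Set R) (ℓ : ℕ) :
    ∑ h ∈ Finset.range ℓ, Ideal.span (f h) =
      Ideal.span (⋃ h ∈ Finset.range ℓ, f h) := by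
  induction ℓ with
  | zero => simp
  | succ l ih =>
      rw [Finset.sum_range_succ, ih, Finset.range_add_one, Finset.set_biUnion_insert,
        Ideal.span_union, Submodule.add_eq_sup, sup_comm]

lemma sumPow_vanish {A : Set (σ →₀ ℕ)} {c : σ} (hA : ∀ a ∈ A, a c = 0) :
    ∀ p, ∀ α ∈ sumPow A p, α c = 0 := by
  intro p
  induction p with
  | zero => intro α hα; simp only [sumPow, Set.mem_singleton_iff] at hα; simp [hα]
  | succ p ih =>
      rintro α ⟨β, hβ, a, ha, rfl⟩
      simp [ih β hβ, hA a ha]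

lemma sumPow_add_nsmul {A : Set (σ →₀ ℕ)} {b₀ : σ →₀ ℕ} (hb : b₀ ∈ A) {h : ℕ}
    (t : ℕ) {β : σ →₀ ℕ} (hβ : β ∈ sumPow A h) : β + t • b₀ ∈ sumPow A (h + t) := by
  induction t with
  | zero => simpa using hβ
  | succ t ih =>
      have h1 : β + (t + 1) • b₀ = (β + t • b₀) + b₀ := by
        rw [succ_nsmul, add_assoc]
      rw [h1, ← Nat.add_assoc, sumPow_succ]
      exact Set.add_mem_add ih hb

lemma prod_X_eq {τ : Type*} (f : τ → σ) (s : Finset τ) :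
    (∏ i ∈ s, (X (f i) : MvPolynomial σ K)) =
      monomial (∑ i ∈ s, Finsupp.single (f i) 1) 1 := by
  classical
  induction s using Finset.induction_on with
  | empty => simp
  | insert a s hx ih =>
      have hX : (X (f a) : MvPolynomial σ K) = monomial (Finsupp.single (f a) 1) 1 := by
        rw [← pow_one (X (f a)), X_pow_eq_monomial]
      rw [Finset.prod_insert hx, Finset.sum_insert hx, ih, hX, monomial_mul, one_mul]

noncomputable def exV (n m : ℕ) : (Fin n ⊕ Fin m) →₀ ℕ := ∑ i : Fin n, Finsupp.single (Sum.inl i) 1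
noncomputable def eyV (n m : ℕ) : (Fin n ⊕ Fin m) →₀ ℕ := ∑ j : Fin m, Finsupp.single (Sum.inr j) 1

lemma exV_inl (n m : ℕ) (i : Fin n) : exV n m (Sum.inl i) = 1 := by
  simp [exV, Finsupp.finset_sum_apply, Finsupp.single_apply]
lemma exV_inr (n m : ℕ) (j : Fin m) : exV n m (Sum.inr j) = 0 := by
  simp [exV, Finsupp.finset_sum_apply, Finsupp.single_apply]
lemma eyV_inl (n m : ℕ) (i : Fin n) : eyV n m (Sum.inl i) = 0 := by
  simp [eyV, Finsupp.finset_sum_apply, Finsupp.single_apply]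
lemma eyV_inr (n m : ℕ) (j : Fin m) : eyV n m (Sum.inr j) = 1 := by
  simp [eyV, Finsupp.finset_sum_apply, Finsupp.single_apply]

lemma core {n m : ℕ} {A B : Set ((Fin n ⊕ Fin m) →₀ ℕ)}
    (hA : ∀ a ∈ A, ∀ j : Fin m, a (Sum.inr j) = 0)
    (hB : ∀ b ∈ B, ∀ i : Fin n, b (Sum.inl i) = 0)
    {a₀ b₀ : (Fin n ⊕ Fin m) →₀ ℕ} (ha₀ : a₀ ∈ A) (hb₀ : b₀ ∈ B)
    (ha₀x : a₀ ≤ exV n m) (hb₀y : b₀ ≤ eyV n m)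
    {k ℓ : ℕ} (hℓ₁ : 0 < ℓ) (hℓ₂ : ℓ ≤ k) (μ : (Fin n ⊕ Fin m) →₀ ℕ) :
    ((∃ s ∈ ⋃ h ∈ Finset.range ℓ,
        ({(k - h) • eyV n m + h • exV n m} + sumPow A (k - h) + sumPow B h), s ≤ μ) ∧
      (∃ s ∈ {(k - ℓ) • eyV n m + ℓ • exV n m} + sumPow A (k - ℓ) + sumPow B ℓ, s ≤ μ)) ↔
    (∃ s ∈ {(k - ℓ + 1) • eyV n m + ℓ • exV n m} + sumPow B (ℓ - 1) + sumPow A (k - ℓ),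
        s ≤ μ) := by
  have hAv : ∀ p, ∀ α ∈ sumPow A p, ∀ j : Fin m, α (Sum.inr j) = 0 :=
    fun p α hα j => sumPow_vanish (fun a ha => hA a ha j) p α hα
  have hBv : ∀ p, ∀ β ∈ sumPow B p, ∀ i : Fin n, β (Sum.inl i) = 0 :=
    fun p β hβ i => sumPow_vanish (fun b hb => hB b hb i) p β hβ
  have ha₀r : ∀ j : Fin m, a₀ (Sum.inr j) = 0 := hA a₀ ha₀
  have hb₀l : ∀ i : Fin n, b₀ (Sum.inl i) = 0 := hB b₀ hb₀
  have ha₀l : ∀ i : Fin n, a₀ (Sum.inl i) ≤ 1 := by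
    intro i; have := ha₀x (Sum.inl i); rwa [exV_inl] at this
  have hb₀r : ∀ j : Fin m, b₀ (Sum.inr j) ≤ 1 := by
    intro j; have := hb₀y (Sum.inr j); rwa [eyV_inr] at this
  constructor
  · rintro ⟨⟨s1, hs1U, hs1μ⟩, ⟨s2, hs2, hs2μ⟩⟩
    rw [Set.mem_iUnion₂] at hs1U
    obtain ⟨h, hh, hs1⟩ := hs1U
    rw [Finset.mem_range] at hh
    obtain ⟨u, ⟨c1, hc1, α, hα, rfl⟩, β, hβ, rfl⟩ := hs1
    rw [Set.mem_singleton_iff] at hc1; subst hc1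
    obtain ⟨u, ⟨c2, hc2, α', hα', rfl⟩, β', hβ', rfl⟩ := hs2
    rw [Set.mem_singleton_iff] at hc2; subst hc2
    set t := ℓ - 1 - h with ht
    have hβ₂ : β + t • b₀ ∈ sumPow B (ℓ - 1) := by
      have := sumPow_add_nsmul hb₀ t hβ
      rwa [show h + t = ℓ - 1 by omega] at this
    refine ⟨((k - ℓ + 1) • eyV n m + ℓ • exV n m) + (β + t • b₀) + α',
      Set.add_mem_add (Set.add_mem_add rfl hβ₂) hα', ?_⟩
    intro c
    rcases c with i | j
    · have h2 := hs2μ (Sum.inl i)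
      simp only [Finsupp.add_apply, Finsupp.smul_apply, smul_eq_mul, exV_inl, eyV_inl,
        hBv _ β' hβ' i, hBv _ β hβ i, hb₀l i] at h2 ⊢
      omega
    · have h1 := hs1μ (Sum.inr j)
      simp only [Finsupp.add_apply, Finsupp.smul_apply, smul_eq_mul, exV_inr, eyV_inr,
        hAv _ α hα j, hAv _ α' hα' j] at h1 ⊢
      have hbb : t * b₀ (Sum.inr j) ≤ t * 1 := Nat.mul_le_mul_left t (hb₀r j)
      omega
  · rintro ⟨s, ⟨u, ⟨c, hc, β'', hβ'', rfl⟩, α', hα', rfl⟩, hsμ⟩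
    rw [Set.mem_singleton_iff] at hc; subst hc
    constructor
    · have hα'' : α' + a₀ ∈ sumPow A (k - (ℓ - 1)) := by
        have := sumPow_add_nsmul ha₀ 1 hα'
        rwa [one_nsmul, show k - ℓ + 1 = k - (ℓ - 1) by omega] at this
      refine ⟨((k - (ℓ - 1)) • eyV n m + (ℓ - 1) • exV n m) + (α' + a₀) + β'', ?_, ?_⟩
      · rw [Set.mem_iUnion₂]
        exact ⟨ℓ - 1, Finset.mem_range.mpr (by omega),
          Set.add_mem_add (Set.add_mem_add rfl hα'') hβ''⟩
      · intro c
        have hr := hsμ c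
        rcases c with i | j
        · have := ha₀l i
          simp only [Finsupp.add_apply, Finsupp.smul_apply, smul_eq_mul, exV_inl, eyV_inl,
            hBv _ β'' hβ'' i] at hr ⊢
          omega
        · have := ha₀r j
          simp only [Finsupp.add_apply, Finsupp.smul_apply, smul_eq_mul, exV_inr, eyV_inr,
            hAv _ α' hα' j, ha₀r j] at hr ⊢
          omega
    · have hββ : β'' + b₀ ∈ sumPow B ℓ := by
        have := sumPow_add_nsmul hb₀ 1 hβ''
        rwa [one_nsmul, show ℓ - 1 + 1 = ℓ by omega] at this
      refine ⟨((k - ℓ) • eyV n m + ℓ • exV n m) + α' + (β'' + b₀),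
        Set.add_mem_add (Set.add_mem_add rfl hα') hββ, ?_⟩
      intro c
      have hr := hsμ c
      rcases c with i | j
      · simp only [Finsupp.add_apply, Finsupp.smul_apply, smul_eq_mul, exV_inl, eyV_inl,
          hBv _ β'' hβ'' i, hb₀l i] at hr ⊢
        omega
      · have := hb₀r j
        simp only [Finsupp.add_apply, Finsupp.smul_apply, smul_eq_mul, exV_inr, eyV_inr,
          hAv _ α' hα' j] at hr ⊢
        omega


lemma span_single_term {K : Type*} [Field K] {σ : Type*} (c d : σ →₀ ℕ) (p q : ℕ) :
    (Ideal.span {(monomial c (1 : K)) ^ p * (monomial d (1 : K)) ^ q}) =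
      Ideal.span ((fun a => (monomial a (1 : K))) '' {p • c + q • d}) := by
  rw [Set.image_singleton, monomial_pow, monomial_pow, monomial_mul, one_pow, one_pow, one_mul]

end BettiAux
end BettiAuxSec

open BettiAux in
/-- Let `S = K[x₁,…,xₙ,y₁,…,yₘ]`, `I₁ ⊆ K[x]`, `I₂ ⊆ K[y]` monomial ideals
with `x₁⋯xₙ ∈ I₁` and `y₁⋯yₘ ∈ I₂`.  For `1 ≤ ℓ ≤ k` and
`J_{ℓ-1} = ∑_{h=0}^{ℓ-1} (y₁⋯yₘ)^{k-h}(x₁⋯xₙ)^h I₁^{k-h} I₂^h` one has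
`J_{ℓ-1} ∩ ((y₁⋯yₘ)^{k-ℓ}(x₁⋯xₙ)^ℓ I₁^{k-ℓ} I₂^ℓ)
  = (y₁⋯yₘ)^{k-ℓ+1} I₂^{ℓ-1} (x₁⋯xₙ)^ℓ I₁^{k-ℓ}`. -/
theorem betti_splitting_intersection
    (K : Type*) [Field K] (n m : ℕ)
    (I₁ I₂ : Ideal (MvPolynomial (Fin n ⊕ Fin m) K))
    (hI₁ : ∃ A : Set ((Fin n ⊕ Fin m) →₀ ℕ),
      (∀ a ∈ A, ∀ j : Fin m, a (Sum.inr j) = 0) ∧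
      I₁ = Ideal.span ((fun a => (MvPolynomial.monomial a (1 : K))) '' A))
    (hI₂ : ∃ B : Set ((Fin n ⊕ Fin m) →₀ ℕ),
      (∀ b ∈ B, ∀ i : Fin n, b (Sum.inl i) = 0) ∧
      I₂ = Ideal.span ((fun b => (MvPolynomial.monomial b (1 : K))) '' B))
    (hx : (∏ i : Fin n, (MvPolynomial.X (Sum.inl i) :
      MvPolynomial (Fin n ⊕ Fin m) K)) ∈ I₁)
    (hy : (∏ j : Fin m, (MvPolynomial.X (Sum.inr j) :
      MvPolynomial (Fin n ⊕ Fin m) K)) ∈ I₂)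
    (k ℓ : ℕ) (hk : 1 ≤ k) (hℓ₁ : 0 < ℓ) (hℓ₂ : ℓ ≤ k) :
    (∑ h ∈ Finset.range ℓ,
        Ideal.span {(∏ j : Fin m, (MvPolynomial.X (Sum.inr j) :
            MvPolynomial (Fin n ⊕ Fin m) K)) ^ (k - h) *
          (∏ i : Fin n, MvPolynomial.X (Sum.inl i)) ^ h} *
        I₁ ^ (k - h) * I₂ ^ h) ⊓
      (Ideal.span {(∏ j : Fin m, (MvPolynomial.X (Sum.inr j) :
            MvPolynomial (Fin n ⊕ Fin m) K)) ^ (k - ℓ) *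
          (∏ i : Fin n, MvPolynomial.X (Sum.inl i)) ^ ℓ} *
        I₁ ^ (k - ℓ) * I₂ ^ ℓ) =
    Ideal.span {(∏ j : Fin m, (MvPolynomial.X (Sum.inr j) :
          MvPolynomial (Fin n ⊕ Fin m) K)) ^ (k - ℓ + 1) *
        (∏ i : Fin n, MvPolynomial.X (Sum.inl i)) ^ ℓ} *
      I₂ ^ (ℓ - 1) * I₁ ^ (k - ℓ) := by
  classical
  obtain ⟨A, hA, rfl⟩ := hI₁
  obtain ⟨B, hB, rfl⟩ := hI₂
  have hxeq : (∏ i : Fin n, (X (Sum.inl i) : MvPolynomial (Fin n ⊕ Fin m) K)) =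
      monomial (exV n m) 1 := prod_X_eq _ _
  have hyeq : (∏ j : Fin m, (X (Sum.inr j) : MvPolynomial (Fin n ⊕ Fin m) K)) =
      monomial (eyV n m) 1 := prod_X_eq _ _
  rw [hxeq] at hx
  rw [hyeq] at hy
  rw [mem_ideal_span_monomial_image] at hx hy
  have hsx : (monomial (exV n m) (1 : K)).support = {exV n m} := support_monomial.trans (by simp)
  have hsy : (monomial (eyV n m) (1 : K)).support = {eyV n m} := support_monomial.trans (by simp)
  rw [hsx] at hx; rw [hsy] at hy
  obtain ⟨a₀, ha₀, ha₀x⟩ := hx (exV n m) (Finset.mem_singleton_self _)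
  obtain ⟨b₀, hb₀, hb₀y⟩ := hy (eyV n m) (Finset.mem_singleton_self _)
  rw [hxeq, hyeq]
  simp_rw [span_single_term, span_mono_pow, span_mono_mul, sum_span]
  rw [← Set.image_iUnion₂ (fun a => (monomial a (1 : K)))]
  ext p
  rw [Submodule.mem_inf]
  simp only [mem_ideal_span_monomial_image]
  constructor
  · rintro ⟨h1, h2⟩ μ hμ
    exact (core hA hB ha₀ hb₀ ha₀x hb₀y hℓ₁ hℓ₂ μ).mp ⟨h1 μ hμ, h2 μ hμ⟩
  · intro hr
    exact ⟨fun μ hμ => ((core hA hB ha₀ hb₀ ha₀x hb₀y hℓ₁ hℓ₂ μ).mpr (hr μ hμ)).1,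
      fun μ hμ => ((core hA hB ha₀ hb₀ ha₀x hb₀y hℓ₁ hℓ₂ μ).mpr (hr μ hμ)).2⟩
end

section
/- Let G be a finite simple graph on the vertex set [n] without isolated vertices, and let I_1 = I_c(G) be its complementary edge ideal in S = K[x_1,…,x_n]. Then for all integers k ≥ ℓ ≥ 1 one has ∂( (x_1⋯x_n)^{ℓ} I_1^{k−ℓ} ) ⊆ (x_1⋯x_n)^{ℓ−1} I_1^{k+1−ℓ}, where ∂J denotes the ideal generated by all u/x_i with u a minimal monomial generator of J and x_i dividing u. -/
open MvPolynomial Finset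

set_option maxHeartbeats 1000000
set_option synthInstance.maxHeartbeats 1000000

open CompEdge in
/-- For a graph `G` on `[n]` without isolated vertices, with
`I₁ = I_c(G)`, for all `k ≥ ℓ ≥ 1` one has
`∂((x₁⋯xₙ)^ℓ I₁^{k-ℓ}) ⊆ (x₁⋯xₙ)^{ℓ-1} I₁^{k+1-ℓ}`. -/
theorem derivIdeal_power_compEdgeIdeal
    (K : Type*) [Field K] (n : ℕ) (G : SimpleGraph (Fin n))
    (hG : G.NoIsolatedVertices) (k ℓ : ℕ) (hℓ : 1 ≤ ℓ) (hk : ℓ ≤ k) :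
    derivIdeal K n
        (Ideal.span {(∏ i : Fin n, (MvPolynomial.X i : MvPolynomial (Fin n) K)) ^ ℓ} *
          (compEdgeIdeal K n G) ^ (k - ℓ)) ≤
      Ideal.span {(∏ i : Fin n, (MvPolynomial.X i : MvPolynomial (Fin n) K)) ^ (ℓ - 1)} *
        (compEdgeIdeal K n G) ^ (k + 1 - ℓ) := by
  rw [derivIdeal]
  apply Ideal.span_le.2
  rintro v ⟨u, ⟨_, huJ, _⟩, i, _, hXiv⟩
  obtain ⟨j, hij⟩ := hG i
  rw [Ideal.mem_span_singleton_mul] at huJ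
  obtain ⟨z, hz, hu⟩ := huJ
  have hne : i ≠ j := G.ne_of_adj hij
  have hP : (∏ t : Fin n, (X t : MvPolynomial (Fin n) K)) =
      X i * X j * sqMon K n (Finset.univ \ {i, j}) := by
    rw [sqMon, ← Finset.prod_sdiff (Finset.subset_univ ({i, j} : Finset (Fin n))),
      Finset.prod_pair hne]
    ring
  have hw : sqMon K n (Finset.univ \ {i, j}) ∈ compEdgeIdeal K n G :=
    Ideal.subset_span ⟨i, j, hij, rfl⟩
  have hv : v = (∏ t : Fin n, (X t : MvPolynomial (Fin n) K)) ^ (ℓ - 1) *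
      (X j * sqMon K n (Finset.univ \ {i, j}) * z) := by
    apply mul_left_cancel₀ (show (X i : MvPolynomial (Fin n) K) ≠ 0 from X_ne_zero i)
    rw [hXiv, ← hu]
    conv_lhs => rw [show ℓ = (ℓ - 1) + 1 by omega, pow_succ]
    rw [hP]
    ring
  rw [hv, SetLike.mem_coe, Ideal.mem_span_singleton_mul]
  refine ⟨X j * sqMon K n (Finset.univ \ {i, j}) * z, ?_, rfl⟩
  have hkk : k + 1 - ℓ = (k - ℓ) + 1 := by omega
  rw [hkk, pow_succ', mul_assoc]
  exact Ideal.mul_mem_left _ _ (Ideal.mul_mem_mul hw hz)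
end
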